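/- arXiv:2310.20552 — 2 statements merged into one kernel-verified Lean document; each statement's English description precedes it below -/
import Mathlib

section
/- Let G be a graph with minimum degree ≥ D_min ≥ 2, let W be a d×d matrix, and let all node embeddings have unit ℓ2 norm. Under the GCN update h̃_v = W h_v/(d_v+1) + ∑_{u∈N(v)} W h_u/(√(d_v+1)·√(d_u+1)), removing one edge (u*,v*) changes the output at v* by at most (‖W‖_op)·( (1 - 1/D_min)/(2 D_min) + 1/(D_min(D_min+1)) + 1/(D_min+1) ), i.e., ‖h̃_{v*} - h̃'_{v*}‖₂ ≤ ((1-1/D_min)/(2D_min) + 1/(D_min(D_min+1)) + 1/(D_min+1))·‖W‖_op. -/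
lemma keypoly (D n : ℝ) (hD : 2 ≤ D) (hn : D ≤ n) :
    (n-1)^2 * D^4 ≤ (D-1)^2 * (D+1) * n^3 := by
  obtain ⟨s, hs, rfl⟩ : ∃ s, 0 ≤ s ∧ D = 2 + s := ⟨D - 2, by linarith, by ring⟩
  obtain ⟨t, ht, rfl⟩ : ∃ t, 0 ≤ t ∧ n = 2 + s + t := ⟨n - (2+s), by linarith, by ring⟩
  nlinarith [mul_nonneg (pow_nonneg hs 1) (pow_nonneg ht 1),
    mul_nonneg (pow_nonneg hs 1) (pow_nonneg ht 2),
    mul_nonneg (pow_nonneg hs 1) (pow_nonneg ht 3),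
    mul_nonneg (pow_nonneg hs 2) (pow_nonneg ht 1),
    mul_nonneg (pow_nonneg hs 2) (pow_nonneg ht 2),
    mul_nonneg (pow_nonneg hs 2) (pow_nonneg ht 3),
    mul_nonneg (pow_nonneg hs 3) (pow_nonneg ht 1),
    mul_nonneg (pow_nonneg hs 3) (pow_nonneg ht 2),
    mul_nonneg (pow_nonneg hs 3) (pow_nonneg ht 3),
    mul_nonneg (pow_nonneg hs 4) (pow_nonneg ht 1),
    mul_nonneg (pow_nonneg hs 4) (pow_nonneg ht 2),
    mul_nonneg (pow_nonneg hs 5) (pow_nonneg ht 1),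
    pow_nonneg hs 2, pow_nonneg hs 3, pow_nonneg hs 4, pow_nonneg hs 5,
    pow_nonneg ht 2, pow_nonneg ht 3]

lemma keysqrt (D n : ℝ) (hD : 2 ≤ D) (hn : D ≤ n) :
    (n - 1) * ((Real.sqrt n)⁻¹ - (Real.sqrt (n+1))⁻¹) * (Real.sqrt (D+1))⁻¹
      ≤ (1 - 1/D) / (2*D) := by
  have hn0 : (0:ℝ) < n := by linarith
  have hD0 : (0:ℝ) < D := by linarith
  set s := Real.sqrt n with hsdef
  set t := Real.sqrt (n+1) with htdef
  set r := Real.sqrt (D+1) with hrdef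
  have hs : 0 < s := Real.sqrt_pos.2 hn0
  have ht : 0 < t := Real.sqrt_pos.2 (by linarith)
  have hr : 0 < r := Real.sqrt_pos.2 (by linarith)
  have hs2 : s^2 = n := Real.sq_sqrt hn0.le
  have ht2 : t^2 = n + 1 := Real.sq_sqrt (by linarith)
  have hr2 : r^2 = D + 1 := Real.sq_sqrt (by linarith)
  have hst : s ≤ t := Real.sqrt_le_sqrt (by linarith)
  have h1 : s⁻¹ - t⁻¹ = 1 / (s*t*(s+t)) := by
    rw [eq_div_iff (by positivity)]
    have : (t - s) * (t + s) = 1 := by nlinarith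
    field_simp
    linear_combination this
  have h2 : s⁻¹ - t⁻¹ ≤ 1 / (2*n*s) := by
    rw [h1]
    apply one_div_le_one_div_of_le (by positivity)
    calc 2*n*s = s*s*(s+s) := by rw [← hs2]; ring
    _ ≤ s*t*(s+t) := by nlinarith
  have h3 : (n - 1) * ((s)⁻¹ - (t)⁻¹) * r⁻¹ ≤ (n-1) / (2*n*s*r) := by
    have : (n - 1) * ((s)⁻¹ - (t)⁻¹) * r⁻¹ ≤ (n-1) * (1/(2*n*s)) * r⁻¹ := by
      apply mul_le_mul_of_nonneg_right _ (by positivity)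
      exact mul_le_mul_of_nonneg_left h2 (by linarith)
    calc (n - 1) * ((s)⁻¹ - (t)⁻¹) * r⁻¹ ≤ (n-1) * (1/(2*n*s)) * r⁻¹ := this
    _ = (n-1) / (2*n*s*r) := by
        field_simp
  refine h3.trans ?_
  have hrhs : (1 - 1/D) / (2*D) = (D-1) / (2*D^2) := by
    rw [div_eq_div_iff (by positivity) (by positivity)]
    field_simp
  rw [hrhs, div_le_div_iff₀ (by positivity) (by positivity)]
  -- (n-1) * (2*D^2) ≤ (D-1) * (2*n*s*r)
  have key : (n-1)^2 * D^4 ≤ (D-1)^2 * (D+1) * n^3 := keypoly D n hD hn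
  have hsr : (s*r)^2 = n*(D+1) := by rw [mul_pow, hs2, hr2]
  have ha : 0 ≤ (n-1) * D^2 := by nlinarith
  have hb : 0 ≤ (D-1) * (n*(s*r)) := mul_nonneg (by linarith) (by positivity)
  have hsq : ((n-1) * D^2)^2 ≤ ((D-1) * (n*(s*r)))^2 := by
    calc ((n-1) * D^2)^2 = (n-1)^2 * D^4 := by ring
    _ ≤ (D-1)^2 * (D+1) * n^3 := key
    _ = ((D-1) * (n*(s*r)))^2 := by rw [mul_pow, mul_pow, hsr]; ring
  have hle := Real.sqrt_le_sqrt hsq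
  rw [Real.sqrt_sq ha, Real.sqrt_sq hb] at hle
  nlinarith [hle]

theorem stmt_8 {V : Type*} [Fintype V] [DecidableEq V] {d : ℕ}
    (G : SimpleGraph V) [DecidableRel G.Adj] (Dmin : ℕ) (hDmin : 2 ≤ Dmin)
    (hdeg : ∀ v : V, Dmin ≤ G.degree v)
    (W : EuclideanSpace ℝ (Fin d) →L[ℝ] EuclideanSpace ℝ (Fin d))
    (h : V → EuclideanSpace ℝ (Fin d)) (hnorm : ∀ u : V, ‖h u‖ = 1)
    (ustar vstar : V) (hadj : G.Adj ustar vstar) :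
    ‖(((G.degree vstar : ℝ) + 1)⁻¹ • W (h vstar) +
        ∑ u ∈ G.neighborFinset vstar,
          (Real.sqrt ((G.degree vstar : ℝ) + 1) * Real.sqrt ((G.degree u : ℝ) + 1))⁻¹ • W (h u)) -
      (((G.degree vstar : ℝ))⁻¹ • W (h vstar) +
        ∑ u ∈ G.neighborFinset vstar \ {ustar},
          (Real.sqrt ((G.degree vstar : ℝ)) * Real.sqrt ((G.degree u : ℝ) + 1))⁻¹ • W (h u))‖ ≤
      ((1 - 1 / (Dmin : ℝ)) / (2 * (Dmin : ℝ)) + 1 / ((Dmin : ℝ) * ((Dmin : ℝ) + 1)) +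
        1 / ((Dmin : ℝ) + 1)) * ‖W‖ := by
  classical
  set D : ℝ := (Dmin : ℝ) with hDdef
  set n : ℝ := (G.degree vstar : ℝ) with hndef
  have hD2 : (2:ℝ) ≤ D := by rw [hDdef]; exact_mod_cast hDmin
  have hD0 : (0:ℝ) < D := by linarith
  have hnD : D ≤ n := by rw [hDdef, hndef]; exact_mod_cast hdeg vstar
  have hn0 : (0:ℝ) < n := by linarith
  have hdu : ∀ u : V, D ≤ (G.degree u : ℝ) := fun u => by
    rw [hDdef]; exact_mod_cast hdeg u
  have hmem : ustar ∈ G.neighborFinset vstar := by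
    rw [SimpleGraph.mem_neighborFinset]; exact hadj.symm
  have hW : ∀ u : V, ‖W (h u)‖ ≤ ‖W‖ := fun u => by
    have := W.le_opNorm (h u)
    rwa [hnorm u, mul_one] at this
  have hWnn : (0:ℝ) ≤ ‖W‖ := norm_nonneg _
  set N' := G.neighborFinset vstar \ {ustar} with hN'
  -- split the sum
  have hsum : ∑ u ∈ G.neighborFinset vstar,
      (Real.sqrt (n + 1) * Real.sqrt ((G.degree u : ℝ) + 1))⁻¹ • W (h u)
      = (∑ u ∈ N', (Real.sqrt (n + 1) * Real.sqrt ((G.degree u : ℝ) + 1))⁻¹ • W (h u))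
        + (Real.sqrt (n + 1) * Real.sqrt ((G.degree ustar : ℝ) + 1))⁻¹ • W (h ustar) :=
    Finset.sum_eq_sum_sdiff_singleton_add hmem _
  have hsplit : (((n + 1)⁻¹ • W (h vstar) +
        ∑ u ∈ G.neighborFinset vstar,
          (Real.sqrt (n + 1) * Real.sqrt ((G.degree u : ℝ) + 1))⁻¹ • W (h u)) -
      ((n⁻¹ • W (h vstar)) +
        ∑ u ∈ N',
          (Real.sqrt n * Real.sqrt ((G.degree u : ℝ) + 1))⁻¹ • W (h u)))
      = ((n + 1)⁻¹ - n⁻¹) • W (h vstar)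
        + (∑ u ∈ N', ((Real.sqrt (n + 1) * Real.sqrt ((G.degree u : ℝ) + 1))⁻¹
            - (Real.sqrt n * Real.sqrt ((G.degree u : ℝ) + 1))⁻¹) • W (h u))
        + (Real.sqrt (n + 1) * Real.sqrt ((G.degree ustar : ℝ) + 1))⁻¹ • W (h ustar) := by
    rw [hsum]
    simp only [sub_smul, Finset.sum_sub_distrib]
    abel
  rw [hsplit]
  refine (norm_add₃_le).trans ?_
  -- bounds on the three pieces
  have hsqD : Real.sqrt (D+1) * Real.sqrt (D+1) = D + 1 := Real.mul_self_sqrt (by linarith)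
  have hsqDpos : 0 < Real.sqrt (D+1) := Real.sqrt_pos.2 (by linarith)
  have hA : ‖((n + 1)⁻¹ - n⁻¹) • W (h vstar)‖ ≤ 1 / (D * (D+1)) * ‖W‖ := by
    rw [norm_smul, Real.norm_eq_abs]
    have habs : |((n + 1)⁻¹ - n⁻¹)| = 1 / (n * (n+1)) := by
      rw [abs_sub_comm, abs_of_nonneg]
      · field_simp; ring
      · have : (n+1)⁻¹ ≤ n⁻¹ := by
          apply inv_anti₀ hn0; linarith
        linarith
    rw [habs]
    have h1 : 1 / (n * (n+1)) ≤ 1 / (D * (D+1)) := by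
      apply one_div_le_one_div_of_le (by positivity)
      apply mul_le_mul hnD (by linarith) (by linarith) (by linarith)
    exact mul_le_mul h1 (hW vstar) (norm_nonneg _) (by positivity)
  have hC : ‖(Real.sqrt (n + 1) * Real.sqrt ((G.degree ustar : ℝ) + 1))⁻¹ • W (h ustar)‖
      ≤ 1 / (D + 1) * ‖W‖ := by
    rw [norm_smul, Real.norm_eq_abs]
    have h1 : |(Real.sqrt (n + 1) * Real.sqrt ((G.degree ustar : ℝ) + 1))⁻¹| ≤ 1 / (D+1) := by
      rw [abs_of_nonneg (by positivity), inv_eq_one_div]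
      apply one_div_le_one_div_of_le (by linarith)
      calc D + 1 = Real.sqrt (D+1) * Real.sqrt (D+1) := hsqD.symm
      _ ≤ Real.sqrt (n + 1) * Real.sqrt ((G.degree ustar : ℝ) + 1) := by
          apply mul_le_mul (Real.sqrt_le_sqrt (by linarith)) (Real.sqrt_le_sqrt (by linarith [hdu ustar])) hsqDpos.le (Real.sqrt_nonneg _)
    exact mul_le_mul h1 (hW ustar) (norm_nonneg _) (by positivity)
  have hB : ‖∑ u ∈ N', ((Real.sqrt (n + 1) * Real.sqrt ((G.degree u : ℝ) + 1))⁻¹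
            - (Real.sqrt n * Real.sqrt ((G.degree u : ℝ) + 1))⁻¹) • W (h u)‖
      ≤ (n - 1) * ((Real.sqrt n)⁻¹ - (Real.sqrt (n+1))⁻¹) * (Real.sqrt (D+1))⁻¹ * ‖W‖ := by
    have hper : ∀ u ∈ N', ‖((Real.sqrt (n + 1) * Real.sqrt ((G.degree u : ℝ) + 1))⁻¹
            - (Real.sqrt n * Real.sqrt ((G.degree u : ℝ) + 1))⁻¹) • W (h u)‖
        ≤ ((Real.sqrt n)⁻¹ - (Real.sqrt (n+1))⁻¹) * (Real.sqrt (D+1))⁻¹ * ‖W‖ := by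
      intro u _
      rw [norm_smul, Real.norm_eq_abs]
      have hdu1 : (0:ℝ) < Real.sqrt ((G.degree u : ℝ) + 1) :=
        Real.sqrt_pos.2 (by linarith [hdu u])
      have hsn : 0 < Real.sqrt n := Real.sqrt_pos.2 hn0
      have hsn1 : 0 < Real.sqrt (n+1) := Real.sqrt_pos.2 (by linarith)
      have hinv : (Real.sqrt (n+1))⁻¹ ≤ (Real.sqrt n)⁻¹ :=
        inv_anti₀ hsn (Real.sqrt_le_sqrt (by linarith))
      have habs : |((Real.sqrt (n + 1) * Real.sqrt ((G.degree u : ℝ) + 1))⁻¹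
            - (Real.sqrt n * Real.sqrt ((G.degree u : ℝ) + 1))⁻¹)|
          = ((Real.sqrt n)⁻¹ - (Real.sqrt (n+1))⁻¹) * (Real.sqrt ((G.degree u : ℝ) + 1))⁻¹ := by
        rw [abs_sub_comm, abs_of_nonneg]
        · rw [mul_inv, mul_inv]; ring
        · rw [mul_inv, mul_inv]
          have := mul_le_mul_of_nonneg_right hinv (le_of_lt (inv_pos.2 hdu1))
          linarith
      rw [habs]
      have hcoef : ((Real.sqrt n)⁻¹ - (Real.sqrt (n+1))⁻¹) * (Real.sqrt ((G.degree u : ℝ) + 1))⁻¹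
          ≤ ((Real.sqrt n)⁻¹ - (Real.sqrt (n+1))⁻¹) * (Real.sqrt (D+1))⁻¹ := by
        apply mul_le_mul_of_nonneg_left _ (by linarith)
        exact inv_anti₀ hsqDpos (Real.sqrt_le_sqrt (by linarith [hdu u]))
      have hnn : (0:ℝ) ≤ ((Real.sqrt n)⁻¹ - (Real.sqrt (n+1))⁻¹) * (Real.sqrt (D+1))⁻¹ :=
        mul_nonneg (by linarith) (by positivity)
      exact mul_le_mul hcoef (hW u) (norm_nonneg _) hnn
    have hcard : (N'.card : ℝ) = n - 1 := by
      rw [hN', Finset.card_sdiff_of_subset (by simpa using hmem)]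
      simp only [Finset.card_singleton, SimpleGraph.card_neighborFinset_eq_degree]
      have h1 : 1 ≤ G.degree vstar := le_trans (by omega) (hdeg vstar)
      push_cast [Nat.cast_sub h1]
      ring
    refine (norm_sum_le _ _).trans ?_
    refine (Finset.sum_le_sum hper).trans ?_
    exact le_of_eq (by rw [Finset.sum_const, nsmul_eq_mul, hcard]; ring)
  have hkey := keysqrt D n hD2 hnD
  have hBfinal : (n - 1) * ((Real.sqrt n)⁻¹ - (Real.sqrt (n+1))⁻¹) * (Real.sqrt (D+1))⁻¹ * ‖W‖
      ≤ (1 - 1/D) / (2*D) * ‖W‖ := mul_le_mul_of_nonneg_right hkey hWnn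
  have hsum3 : ‖((n + 1)⁻¹ - n⁻¹) • W (h vstar)‖
        + ‖∑ u ∈ N', ((Real.sqrt (n + 1) * Real.sqrt ((G.degree u : ℝ) + 1))⁻¹
            - (Real.sqrt n * Real.sqrt ((G.degree u : ℝ) + 1))⁻¹) • W (h u)‖
        + ‖(Real.sqrt (n + 1) * Real.sqrt ((G.degree ustar : ℝ) + 1))⁻¹ • W (h ustar)‖
      ≤ 1 / (D * (D+1)) * ‖W‖ + (1 - 1/D) / (2*D) * ‖W‖ + 1 / (D + 1) * ‖W‖ := by
    have h2 := hB.trans hBfinal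
    linarith [hA, hC, h2]
  refine hsum3.trans (le_of_eq ?_)
  ring
end

section
/- Under the GCN model with minimum degree D_min ≥ 2 and unit-norm inputs, the total edge sensitivity satisfies √(∑_{v∈V}‖h̃_v - h̃'_v‖²₂) ≤ √2·((1-1/D_min)/(2D_min) + 1/(D_min(D_min+1)) + 1/(D_min+1))·‖W‖_op. -/
private lemma le_of_sq_le' (x y : ℝ) (hy : 0 ≤ y) (h : x^2 ≤ y^2) : x ≤ y := by
  nlinarith

private lemma delta_le' (c : ℝ) (hc : 1 ≤ c) :
    (Real.sqrt c)⁻¹ - (Real.sqrt (c+1))⁻¹ ≤ (2*c*Real.sqrt (c+1))⁻¹ := by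
  have h0 : (0:ℝ) < c := by linarith
  have ha : 0 < Real.sqrt c := Real.sqrt_pos.mpr h0
  have hb : 0 < Real.sqrt (c+1) := Real.sqrt_pos.mpr (by linarith)
  have ha2 : Real.sqrt c * Real.sqrt c = c := Real.mul_self_sqrt h0.le
  have hb2 : Real.sqrt (c+1) * Real.sqrt (c+1) = c + 1 := Real.mul_self_sqrt (by linarith)
  have hp : Real.sqrt c * Real.sqrt (c+1) ≤ c + 1/2 := by
    apply le_of_sq_le' _ _ (by linarith)
    nlinarith
  rw [inv_eq_one_div, inv_eq_one_div, inv_eq_one_div,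
    div_sub_div _ _ ha.ne' hb.ne', div_le_div_iff₀ (by positivity) (by positivity)]
  nlinarith [mul_pos ha hb]

private lemma g_mono_sq (D c : ℝ) (hD : 2 ≤ D) (hc : D ≤ c) :
    (3*c-1)^2 * (D^2*(D+1)) ≤ (3*D-1)^2 * (c^2*(c+1)) := by
  have he : (0:ℝ) ≤ c - D := by linarith
  have h1 : (0:ℝ) ≤ (c-D) * (D*(9*D^3-12*D^2-3*D+2)) := by
    apply mul_nonneg he
    nlinarith [mul_nonneg (by linarith : (0:ℝ) ≤ D-2) (by positivity : (0:ℝ) ≤ 9*D^2+6*D+9), (by linarith : (0:ℝ) ≤ D)]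
  have h2 : (0:ℝ) ≤ (c-D)^2 * (18*D^3-18*D^2-3*D+1) := by
    apply mul_nonneg (sq_nonneg _)
    nlinarith [mul_nonneg (by linarith : (0:ℝ) ≤ D-2) (by positivity : (0:ℝ) ≤ 18*D^2+18*D+33)]
  have h3 : (0:ℝ) ≤ (c-D)^3 * (3*D-1)^2 :=
    mul_nonneg (pow_nonneg he 3) (sq_nonneg _)
  nlinarith [h1, h2, h3]

private lemma final_ineq (D : ℝ) (hD : 2 ≤ D) :
    2*((3*D+1)/(2*D*(D+1)))^2 + (1/(2*D*(D+1)^2) + 1/(2*D*(D+1)^2)) ≤ 2*((3*D-1)/(2*D^2))^2 := by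
  have h1 : (0:ℝ) < D := by linarith
  have h2 : (0:ℝ) < D + 1 := by linarith
  have key : 2*((3*D-1)/(2*D^2))^2 - (2*((3*D+1)/(2*D*(D+1)))^2 + (1/(2*D*(D+1)^2) + 1/(2*D*(D+1)^2)))
      = (4*D^3-3*D^2-4*D+1)/(2*D^4*(D+1)^2) := by
    field_simp
    ring
  nlinarith [key, div_nonneg (by nlinarith [mul_nonneg (by linarith : (0:ℝ) ≤ D-2) (by positivity : (0:ℝ) ≤ 4*D^2+5*D+6)] : (0:ℝ) ≤ 4*D^3-3*D^2-4*D+1) (by positivity : (0:ℝ) ≤ 2*D^4*(D+1)^2)]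

private lemma coef_abs_bound (D c e : ℝ) (hD : 2 ≤ D) (hc : D ≤ c) (he : D ≤ e) :
    |(Real.sqrt (c+1) * Real.sqrt (e+1))⁻¹ - (Real.sqrt c * Real.sqrt (e+1))⁻¹| ≤
      (2*c*Real.sqrt (c+1))⁻¹ * (Real.sqrt (D+1))⁻¹ := by
  have hc0 : (0:ℝ) < c := by linarith
  have ha : 0 < Real.sqrt c := Real.sqrt_pos.mpr hc0
  have hb : 0 < Real.sqrt (c+1) := Real.sqrt_pos.mpr (by linarith)
  have hDD : 0 < Real.sqrt (D+1) := Real.sqrt_pos.mpr (by linarith)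
  have hfact : (Real.sqrt (c+1) * Real.sqrt (e+1))⁻¹ - (Real.sqrt c * Real.sqrt (e+1))⁻¹
      = ((Real.sqrt (c+1))⁻¹ - (Real.sqrt c)⁻¹) * (Real.sqrt (e+1))⁻¹ := by
    rw [mul_inv, mul_inv]; ring
  rw [hfact, abs_mul]
  have h1 : |(Real.sqrt (c+1))⁻¹ - (Real.sqrt c)⁻¹| = (Real.sqrt c)⁻¹ - (Real.sqrt (c+1))⁻¹ := by
    rw [abs_sub_comm, abs_of_nonneg]
    have hss : (Real.sqrt (c+1))⁻¹ ≤ (Real.sqrt c)⁻¹ :=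
      inv_anti₀ ha (Real.sqrt_le_sqrt (by linarith))
    linarith
  rw [h1, abs_of_nonneg (by positivity)]
  have h2 : (Real.sqrt c)⁻¹ - (Real.sqrt (c+1))⁻¹ ≤ (2*c*Real.sqrt (c+1))⁻¹ :=
    delta_le' c (by linarith)
  have h3 : (Real.sqrt (e+1))⁻¹ ≤ (Real.sqrt (D+1))⁻¹ :=
    inv_anti₀ hDD (Real.sqrt_le_sqrt (by linarith))
  have h4 : 0 ≤ (Real.sqrt c)⁻¹ - (Real.sqrt (c+1))⁻¹ := by
    have hss : (Real.sqrt (c+1))⁻¹ ≤ (Real.sqrt c)⁻¹ :=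
      inv_anti₀ ha (Real.sqrt_le_sqrt (by linarith))
    linarith
  exact mul_le_mul h2 h3 (by positivity) (by positivity)

private lemma Ru_le (D c : ℝ) (hD : 2 ≤ D) (hc : D ≤ c) :
    (c*(c+1))⁻¹ + (c-1)*((2*c*Real.sqrt (c+1))⁻¹ * (Real.sqrt (D+1))⁻¹)
      + (Real.sqrt (c+1))⁻¹ * (Real.sqrt (D+1))⁻¹ ≤ (3*D+1)/(2*D*(D+1)) := by
  have hc0 : (0:ℝ) < c := by linarith
  have hD0 : (0:ℝ) < D := by linarith
  set s := Real.sqrt (c+1) with hsdef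
  set tt := Real.sqrt (D+1) with httdef
  have hs : 0 < s := Real.sqrt_pos.mpr (by linarith)
  have htt : 0 < tt := Real.sqrt_pos.mpr (by linarith)
  have hs2 : s * s = c + 1 := Real.mul_self_sqrt (by linarith)
  have htt2 : tt * tt = D + 1 := Real.mul_self_sqrt (by linarith)
  have h1 : (c*(c+1))⁻¹ ≤ (D*(D+1))⁻¹ := by
    apply inv_anti₀ (by positivity); nlinarith
  have hg : (3*c-1) * (D * tt) ≤ (3*D-1) * (c * s) := by
    apply le_of_sq_le' _ _ (mul_nonneg (by linarith) (by positivity))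
    have hgm := g_mono_sq D c hD hc
    calc ((3*c-1) * (D * tt))^2 = (3*c-1)^2 * (D^2*(tt*tt)) := by ring
      _ = (3*c-1)^2 * (D^2*(D+1)) := by rw [htt2]
      _ ≤ (3*D-1)^2 * (c^2*(c+1)) := hgm
      _ = (3*D-1)^2 * (c^2*(s*s)) := by rw [hs2]
      _ = ((3*D-1) * (c * s))^2 := by ring
  have h2 : (c-1)*((2*c*s)⁻¹ * tt⁻¹) + s⁻¹ * tt⁻¹
      = (3*c-1) / (2*c*s*tt) := by
    field_simp
    ring
  have h3 : (3*c-1) / (2*c*s*tt) ≤ (3*D-1)/(2*D*(D+1)) := by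
    rw [div_le_div_iff₀ (by positivity) (by positivity)]
    calc (3*c-1) * (2*D*(D+1)) = ((3*c-1) * (D * tt)) * (2 * tt) := by
          rw [← htt2]; ring
      _ ≤ ((3*D-1) * (c * s)) * (2 * tt) := by
          exact mul_le_mul_of_nonneg_right hg (by positivity)
      _ = (3*D-1) * (2*c*s*tt) := by ring
  have h4 : (D*(D+1))⁻¹ + (3*D-1)/(2*D*(D+1)) = (3*D+1)/(2*D*(D+1)) := by
    field_simp
    ring
  linarith [h2, h3]

private lemma q_bound (D c : ℝ) (hD : 2 ≤ D) (hc : D ≤ c) :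
    2*(c*((2*c*Real.sqrt (c+1))⁻¹ * (Real.sqrt (D+1))⁻¹)^2) ≤ 1/(2*D*(D+1)^2) := by
  have hc0 : (0:ℝ) < c := by linarith
  have hD0 : (0:ℝ) < D := by linarith
  set s := Real.sqrt (c+1) with hsdef
  set tt := Real.sqrt (D+1) with httdef
  have hs : 0 < s := Real.sqrt_pos.mpr (by linarith)
  have htt : 0 < tt := Real.sqrt_pos.mpr (by linarith)
  have hs2 : s * s = c + 1 := Real.mul_self_sqrt (by linarith)
  have htt2 : tt * tt = D + 1 := Real.mul_self_sqrt (by linarith)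
  have key : 2*(c*((2*c*s)⁻¹ * tt⁻¹)^2) = 1/(2*c*(c+1)*(D+1)) := by
    rw [← hs2, ← htt2]
    field_simp
  rw [key, div_le_div_iff₀ (by positivity) (by positivity)]
  have hmul : D*(D+1) ≤ c*(c+1) := by nlinarith
  nlinarith [hmul]

private lemma endpoint_bound {V : Type*} [DecidableEq V] {d : ℕ}
    (D : ℝ) (hD : 2 ≤ D)
    (W : EuclideanSpace ℝ (Fin d) →L[ℝ] EuclideanSpace ℝ (Fin d))
    (h : V → EuclideanSpace ℝ (Fin d)) (hnorm : ∀ u : V, ‖h u‖ = 1)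
    (N N' : V → Finset V)
    (hdeg : ∀ v : V, D ≤ ((N v).card : ℝ))
    (a b : V) (hab : b ∈ N a)
    (hN'a : N' a = N a \ {b})
    (hN'o : ∀ u ∈ N a \ {b}, N' u = N u) :
    ‖((((N a).card : ℝ) + 1)⁻¹ • W (h a) +
        ∑ u ∈ N a, (Real.sqrt (((N a).card : ℝ) + 1) * Real.sqrt (((N u).card : ℝ) + 1))⁻¹ • W (h u))
      - ((((N' a).card : ℝ) + 1)⁻¹ • W (h a) +
        ∑ u ∈ N' a, (Real.sqrt (((N' a).card : ℝ) + 1) * Real.sqrt (((N' u).card : ℝ) + 1))⁻¹ • W (h u))‖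
      ≤ ‖W‖ * ((3*D+1)/(2*D*(D+1))) := by
  have hWh : ∀ u : V, ‖W (h u)‖ ≤ ‖W‖ := fun u => by
    calc ‖W (h u)‖ ≤ ‖W‖ * ‖h u‖ := W.le_opNorm _
      _ = ‖W‖ := by rw [hnorm u, mul_one]
  have hcard1 : 1 ≤ (N a).card := Finset.card_pos.mpr ⟨b, hab⟩
  have hc : D ≤ ((N a).card : ℝ) := hdeg a
  have hc2 : (2:ℝ) ≤ ((N a).card : ℝ) := le_trans hD hc
  have hc0 : (0:ℝ) < ((N a).card : ℝ) := by linarith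
  have hc' : ((N' a).card : ℝ) + 1 = ((N a).card : ℝ) := by
    rw [hN'a, Finset.card_sdiff_of_subset (Finset.singleton_subset_iff.mpr hab),
      Finset.card_singleton, Nat.cast_sub hcard1]
    simp
  rw [hc', hN'a]
  rw [Finset.sum_congr rfl (fun u hu => by rw [hN'o u hu] :
    ∀ u ∈ N a \ {b}, (Real.sqrt ((N a).card : ℝ) * Real.sqrt (((N' u).card : ℝ) + 1))⁻¹ • W (h u)
      = (Real.sqrt ((N a).card : ℝ) * Real.sqrt (((N u).card : ℝ) + 1))⁻¹ • W (h u))]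
  rw [Finset.sum_eq_sum_sdiff_singleton_add hab
    (fun u => (Real.sqrt (((N a).card : ℝ) + 1) * Real.sqrt (((N u).card : ℝ) + 1))⁻¹ • W (h u))]
  have rearr : ((((N a).card : ℝ) + 1)⁻¹ • W (h a) +
        (∑ u ∈ N a \ {b}, (Real.sqrt (((N a).card : ℝ) + 1) * Real.sqrt (((N u).card : ℝ) + 1))⁻¹ • W (h u)
          + (Real.sqrt (((N a).card : ℝ) + 1) * Real.sqrt (((N b).card : ℝ) + 1))⁻¹ • W (h b)))
      - ((((N a).card : ℝ))⁻¹ • W (h a) +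
        ∑ u ∈ N a \ {b}, (Real.sqrt ((N a).card : ℝ) * Real.sqrt (((N u).card : ℝ) + 1))⁻¹ • W (h u))
      = (((((N a).card : ℝ) + 1)⁻¹ - (((N a).card : ℝ))⁻¹) • W (h a))
        + (∑ u ∈ N a \ {b}, ((Real.sqrt (((N a).card : ℝ) + 1) * Real.sqrt (((N u).card : ℝ) + 1))⁻¹
            - (Real.sqrt ((N a).card : ℝ) * Real.sqrt (((N u).card : ℝ) + 1))⁻¹) • W (h u))
        + (Real.sqrt (((N a).card : ℝ) + 1) * Real.sqrt (((N b).card : ℝ) + 1))⁻¹ • W (h b) := by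
    simp only [sub_smul, Finset.sum_sub_distrib]
    abel
  rw [rearr]
  have step1 : ‖(((((N a).card : ℝ) + 1)⁻¹ - (((N a).card : ℝ))⁻¹) • W (h a))‖
      ≤ (((N a).card : ℝ) * (((N a).card : ℝ) + 1))⁻¹ * ‖W‖ := by
    rw [norm_smul, Real.norm_eq_abs]
    have habs : |(((N a).card : ℝ) + 1)⁻¹ - (((N a).card : ℝ))⁻¹|
        = (((N a).card : ℝ) * (((N a).card : ℝ) + 1))⁻¹ := by
      rw [abs_sub_comm, abs_of_nonneg]
      · field_simp; ring
      · have : (((N a).card : ℝ) + 1)⁻¹ ≤ (((N a).card : ℝ))⁻¹ :=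
          inv_anti₀ hc0 (by linarith)
        linarith
    rw [habs]
    exact mul_le_mul_of_nonneg_left (hWh a) (by positivity)
  have step2 : ‖∑ u ∈ N a \ {b}, ((Real.sqrt (((N a).card : ℝ) + 1) * Real.sqrt (((N u).card : ℝ) + 1))⁻¹
            - (Real.sqrt ((N a).card : ℝ) * Real.sqrt (((N u).card : ℝ) + 1))⁻¹) • W (h u)‖
      ≤ (((N a).card : ℝ) - 1) * ((2*((N a).card : ℝ)*Real.sqrt (((N a).card : ℝ)+1))⁻¹ * (Real.sqrt (D+1))⁻¹) * ‖W‖ := by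
    calc ‖∑ u ∈ N a \ {b}, ((Real.sqrt (((N a).card : ℝ) + 1) * Real.sqrt (((N u).card : ℝ) + 1))⁻¹
            - (Real.sqrt ((N a).card : ℝ) * Real.sqrt (((N u).card : ℝ) + 1))⁻¹) • W (h u)‖
        ≤ ∑ u ∈ N a \ {b}, ‖((Real.sqrt (((N a).card : ℝ) + 1) * Real.sqrt (((N u).card : ℝ) + 1))⁻¹
            - (Real.sqrt ((N a).card : ℝ) * Real.sqrt (((N u).card : ℝ) + 1))⁻¹) • W (h u)‖ :=
          norm_sum_le _ _
      _ ≤ ∑ u ∈ N a \ {b}, ((2*((N a).card : ℝ)*Real.sqrt (((N a).card : ℝ)+1))⁻¹ * (Real.sqrt (D+1))⁻¹) * ‖W‖ := by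
          apply Finset.sum_le_sum
          intro u hu
          rw [norm_smul, Real.norm_eq_abs]
          have hcu : ((N u).card : ℝ) + 1 = ((N u).card : ℝ) + 1 := rfl
          have hb1 := coef_abs_bound D ((N a).card : ℝ) ((N u).card : ℝ) hD hc (hdeg u)
          exact mul_le_mul hb1 (hWh u) (norm_nonneg _) (by positivity)
      _ = (((N a \ {b}).card : ℝ)) * (((2*((N a).card : ℝ)*Real.sqrt (((N a).card : ℝ)+1))⁻¹ * (Real.sqrt (D+1))⁻¹) * ‖W‖) := by
          rw [Finset.sum_const, nsmul_eq_mul]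
      _ = (((N a).card : ℝ) - 1) * ((2*((N a).card : ℝ)*Real.sqrt (((N a).card : ℝ)+1))⁻¹ * (Real.sqrt (D+1))⁻¹) * ‖W‖ := by
          rw [Finset.card_sdiff_of_subset (Finset.singleton_subset_iff.mpr hab), Finset.card_singleton,
            Nat.cast_sub hcard1]
          push_cast
          ring
  have step3 : ‖(Real.sqrt (((N a).card : ℝ) + 1) * Real.sqrt (((N b).card : ℝ) + 1))⁻¹ • W (h b)‖
      ≤ ((Real.sqrt (((N a).card : ℝ)+1))⁻¹ * (Real.sqrt (D+1))⁻¹) * ‖W‖ := by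
    rw [norm_smul, Real.norm_eq_abs]
    have hcoef : |(Real.sqrt (((N a).card : ℝ) + 1) * Real.sqrt (((N b).card : ℝ) + 1))⁻¹|
        ≤ (Real.sqrt (((N a).card : ℝ)+1))⁻¹ * (Real.sqrt (D+1))⁻¹ := by
      rw [abs_of_nonneg (by positivity), mul_inv]
      apply mul_le_mul_of_nonneg_left _ (by positivity)
      apply inv_anti₀ (Real.sqrt_pos.mpr (by linarith))
      exact Real.sqrt_le_sqrt (by linarith [hdeg b])
    exact mul_le_mul hcoef (hWh b) (norm_nonneg _) (by positivity)
  calc ‖_ + _ + _‖ ≤ _ := norm_add₃_le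
    _ ≤ (((N a).card : ℝ) * (((N a).card : ℝ) + 1))⁻¹ * ‖W‖
        + (((N a).card : ℝ) - 1) * ((2*((N a).card : ℝ)*Real.sqrt (((N a).card : ℝ)+1))⁻¹ * (Real.sqrt (D+1))⁻¹) * ‖W‖
        + ((Real.sqrt (((N a).card : ℝ)+1))⁻¹ * (Real.sqrt (D+1))⁻¹) * ‖W‖ :=
          add_le_add (add_le_add step1 step2) step3
    _ = ((((N a).card : ℝ) * (((N a).card : ℝ) + 1))⁻¹
        + (((N a).card : ℝ) - 1) * ((2*((N a).card : ℝ)*Real.sqrt (((N a).card : ℝ)+1))⁻¹ * (Real.sqrt (D+1))⁻¹)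
        + (Real.sqrt (((N a).card : ℝ)+1))⁻¹ * (Real.sqrt (D+1))⁻¹) * ‖W‖ := by ring
    _ ≤ ((3*D+1)/(2*D*(D+1))) * ‖W‖ := by
          apply mul_le_mul_of_nonneg_right (Ru_le D ((N a).card : ℝ) hD hc) (norm_nonneg _)
    _ = ‖W‖ * ((3*D+1)/(2*D*(D+1))) := by ring

private lemma other_bound {V : Type*} [DecidableEq V] {d : ℕ}
    (D : ℝ) (hD : 2 ≤ D)
    (W : EuclideanSpace ℝ (Fin d) →L[ℝ] EuclideanSpace ℝ (Fin d))
    (h : V → EuclideanSpace ℝ (Fin d)) (hnorm : ∀ u : V, ‖h u‖ = 1)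
    (N N' : V → Finset V)
    (hdeg : ∀ v : V, D ≤ ((N v).card : ℝ))
    (a b w : V) (hne : a ≠ b)
    (hwN : N' w = N w)
    (hka : ((N' a).card : ℝ) + 1 = ((N a).card : ℝ))
    (hkb : ((N' b).card : ℝ) + 1 = ((N b).card : ℝ))
    (hoth : ∀ u : V, u ≠ a → u ≠ b → N' u = N u) :
    ‖((((N w).card : ℝ) + 1)⁻¹ • W (h w) +
        ∑ u ∈ N w, (Real.sqrt (((N w).card : ℝ) + 1) * Real.sqrt (((N u).card : ℝ) + 1))⁻¹ • W (h u))
      - ((((N' w).card : ℝ) + 1)⁻¹ • W (h w) +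
        ∑ u ∈ N' w, (Real.sqrt (((N' w).card : ℝ) + 1) * Real.sqrt (((N' u).card : ℝ) + 1))⁻¹ • W (h u))‖
      ≤ ‖W‖ * ((if a ∈ N w then (2*((N a).card : ℝ)*Real.sqrt (((N a).card : ℝ)+1))⁻¹ * (Real.sqrt (D+1))⁻¹ else 0)
          + (if b ∈ N w then (2*((N b).card : ℝ)*Real.sqrt (((N b).card : ℝ)+1))⁻¹ * (Real.sqrt (D+1))⁻¹ else 0)) := by
  have hWh : ∀ u : V, ‖W (h u)‖ ≤ ‖W‖ := fun u => by
    calc ‖W (h u)‖ ≤ ‖W‖ * ‖h u‖ := W.le_opNorm _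
      _ = ‖W‖ := by rw [hnorm u, mul_one]
  rw [hwN]
  have rearr : ((((N w).card : ℝ) + 1)⁻¹ • W (h w) +
        ∑ u ∈ N w, (Real.sqrt (((N w).card : ℝ) + 1) * Real.sqrt (((N u).card : ℝ) + 1))⁻¹ • W (h u))
      - ((((N w).card : ℝ) + 1)⁻¹ • W (h w) +
        ∑ u ∈ N w, (Real.sqrt (((N w).card : ℝ) + 1) * Real.sqrt (((N' u).card : ℝ) + 1))⁻¹ • W (h u))
      = ∑ u ∈ N w, ((Real.sqrt (((N w).card : ℝ) + 1) * Real.sqrt (((N u).card : ℝ) + 1))⁻¹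
          - (Real.sqrt (((N w).card : ℝ) + 1) * Real.sqrt (((N' u).card : ℝ) + 1))⁻¹) • W (h u) := by
    simp only [sub_smul, Finset.sum_sub_distrib]
    abel
  rw [rearr]
  have pointwise : ∀ u ∈ N w,
      ‖((Real.sqrt (((N w).card : ℝ) + 1) * Real.sqrt (((N u).card : ℝ) + 1))⁻¹
          - (Real.sqrt (((N w).card : ℝ) + 1) * Real.sqrt (((N' u).card : ℝ) + 1))⁻¹) • W (h u)‖
      ≤ ((if u = a then (2*((N a).card : ℝ)*Real.sqrt (((N a).card : ℝ)+1))⁻¹ * (Real.sqrt (D+1))⁻¹ else 0)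
          + (if u = b then (2*((N b).card : ℝ)*Real.sqrt (((N b).card : ℝ)+1))⁻¹ * (Real.sqrt (D+1))⁻¹ else 0)) * ‖W‖ := by
    intro u hu
    rw [norm_smul, Real.norm_eq_abs]
    by_cases hua : u = a
    · subst hua
      simp only [if_pos rfl, if_neg hne]
      have hco : |(Real.sqrt (((N w).card : ℝ) + 1) * Real.sqrt (((N u).card : ℝ) + 1))⁻¹
          - (Real.sqrt (((N w).card : ℝ) + 1) * Real.sqrt (((N' u).card : ℝ) + 1))⁻¹|
          ≤ (2*((N u).card : ℝ)*Real.sqrt (((N u).card : ℝ)+1))⁻¹ * (Real.sqrt (D+1))⁻¹ := by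
        rw [hka, abs_sub_comm,
          mul_comm (Real.sqrt (((N w).card : ℝ) + 1)) (Real.sqrt ((N u).card : ℝ)),
          mul_comm (Real.sqrt (((N w).card : ℝ) + 1)) (Real.sqrt (((N u).card : ℝ) + 1)),
          abs_sub_comm]
        exact coef_abs_bound D ((N u).card : ℝ) ((N w).card : ℝ) hD (hdeg u) (hdeg w)
      calc _ ≤ ((2*((N u).card : ℝ)*Real.sqrt (((N u).card : ℝ)+1))⁻¹ * (Real.sqrt (D+1))⁻¹) * ‖W‖ :=
            mul_le_mul hco (hWh u) (norm_nonneg _) (by positivity)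
        _ = ((2*((N u).card : ℝ)*Real.sqrt (((N u).card : ℝ)+1))⁻¹ * (Real.sqrt (D+1))⁻¹ + 0) * ‖W‖ := by ring
    · by_cases hub : u = b
      · subst hub
        simp only [if_neg hua, if_pos rfl]
        have hco : |(Real.sqrt (((N w).card : ℝ) + 1) * Real.sqrt (((N u).card : ℝ) + 1))⁻¹
            - (Real.sqrt (((N w).card : ℝ) + 1) * Real.sqrt (((N' u).card : ℝ) + 1))⁻¹|
            ≤ (2*((N u).card : ℝ)*Real.sqrt (((N u).card : ℝ)+1))⁻¹ * (Real.sqrt (D+1))⁻¹ := by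
          rw [hkb, abs_sub_comm,
            mul_comm (Real.sqrt (((N w).card : ℝ) + 1)) (Real.sqrt ((N u).card : ℝ)),
            mul_comm (Real.sqrt (((N w).card : ℝ) + 1)) (Real.sqrt (((N u).card : ℝ) + 1)),
            abs_sub_comm]
          exact coef_abs_bound D ((N u).card : ℝ) ((N w).card : ℝ) hD (hdeg u) (hdeg w)
        calc _ ≤ ((2*((N u).card : ℝ)*Real.sqrt (((N u).card : ℝ)+1))⁻¹ * (Real.sqrt (D+1))⁻¹) * ‖W‖ :=
              mul_le_mul hco (hWh u) (norm_nonneg _) (by positivity)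
          _ = (0 + (2*((N u).card : ℝ)*Real.sqrt (((N u).card : ℝ)+1))⁻¹ * (Real.sqrt (D+1))⁻¹) * ‖W‖ := by ring
      · rw [hoth u hua hub]
        simp only [if_neg hua, if_neg hub, sub_self, abs_zero, zero_mul, add_zero]
        simp
  calc ‖∑ u ∈ N w, ((Real.sqrt (((N w).card : ℝ) + 1) * Real.sqrt (((N u).card : ℝ) + 1))⁻¹
          - (Real.sqrt (((N w).card : ℝ) + 1) * Real.sqrt (((N' u).card : ℝ) + 1))⁻¹) • W (h u)‖
      ≤ ∑ u ∈ N w, ‖((Real.sqrt (((N w).card : ℝ) + 1) * Real.sqrt (((N u).card : ℝ) + 1))⁻¹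
          - (Real.sqrt (((N w).card : ℝ) + 1) * Real.sqrt (((N' u).card : ℝ) + 1))⁻¹) • W (h u)‖ :=
        norm_sum_le _ _
    _ ≤ ∑ u ∈ N w, ((if u = a then (2*((N a).card : ℝ)*Real.sqrt (((N a).card : ℝ)+1))⁻¹ * (Real.sqrt (D+1))⁻¹ else 0)
          + (if u = b then (2*((N b).card : ℝ)*Real.sqrt (((N b).card : ℝ)+1))⁻¹ * (Real.sqrt (D+1))⁻¹ else 0)) * ‖W‖ :=
        Finset.sum_le_sum pointwise
    _ = ((if a ∈ N w then (2*((N a).card : ℝ)*Real.sqrt (((N a).card : ℝ)+1))⁻¹ * (Real.sqrt (D+1))⁻¹ else 0)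
          + (if b ∈ N w then (2*((N b).card : ℝ)*Real.sqrt (((N b).card : ℝ)+1))⁻¹ * (Real.sqrt (D+1))⁻¹ else 0)) * ‖W‖ := by
        rw [← Finset.sum_mul, Finset.sum_add_distrib, Finset.sum_ite_eq' (N w) a, Finset.sum_ite_eq' (N w) b]
    _ = ‖W‖ * _ := by ring

set_option maxHeartbeats 1600000 in
theorem stmt_9 {V : Type*} [Fintype V] [DecidableEq V] {d : ℕ}
    (Dmin : ℕ) (hDmin : 2 ≤ Dmin)
    (W : EuclideanSpace ℝ (Fin d) →L[ℝ] EuclideanSpace ℝ (Fin d))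
    (h : V → EuclideanSpace ℝ (Fin d)) (hnorm : ∀ u : V, ‖h u‖ = 1)
    (N N' : V → Finset V)
    (hsym : ∀ u v : V, u ∈ N v ↔ v ∈ N u)
    (hloop : ∀ v : V, v ∉ N v)
    (hmindeg : ∀ v : V, Dmin ≤ (N v).card)
    (ustar vstar : V) (hne : ustar ≠ vstar)
    (hu : vstar ∈ N ustar) (hv : ustar ∈ N vstar)
    (hN'u : N' ustar = N ustar \ {vstar}) (hN'v : N' vstar = N vstar \ {ustar})
    (hother : ∀ w : V, w ≠ ustar → w ≠ vstar → N' w = N w)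
    (t t' : V → EuclideanSpace ℝ (Fin d))
    (ht : ∀ v : V, t v = (((N v).card : ℝ) + 1)⁻¹ • W (h v) +
      ∑ u ∈ N v, (Real.sqrt (((N v).card : ℝ) + 1) * Real.sqrt (((N u).card : ℝ) + 1))⁻¹ • W (h u))
    (ht' : ∀ v : V, t' v = (((N' v).card : ℝ) + 1)⁻¹ • W (h v) +
      ∑ u ∈ N' v, (Real.sqrt (((N' v).card : ℝ) + 1) * Real.sqrt (((N' u).card : ℝ) + 1))⁻¹ • W (h u)) :
    Real.sqrt (∑ v : V, ‖t v - t' v‖ ^ 2) ≤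
      Real.sqrt 2 * ((1 - 1 / (Dmin : ℝ)) / (2 * (Dmin : ℝ)) +
        1 / ((Dmin : ℝ) * ((Dmin : ℝ) + 1)) + 1 / ((Dmin : ℝ) + 1)) * ‖W‖ := by
  classical
  have hD2 : (2:ℝ) ≤ (Dmin:ℝ) := by exact_mod_cast hDmin
  have hD0 : (0:ℝ) < (Dmin:ℝ) := by linarith
  have hdeg : ∀ v : V, (Dmin:ℝ) ≤ ((N v).card : ℝ) := fun v => by exact_mod_cast hmindeg v
  have hW0 : (0:ℝ) ≤ ‖W‖ := norm_nonneg _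
  have hCform : (1 - 1/(Dmin:ℝ))/(2*(Dmin:ℝ)) + 1/((Dmin:ℝ)*((Dmin:ℝ)+1)) + 1/((Dmin:ℝ)+1)
      = (3*(Dmin:ℝ)-1)/(2*(Dmin:ℝ)^2) := by
    field_simp
    ring
  set C : ℝ := (3*(Dmin:ℝ)-1)/(2*(Dmin:ℝ)^2) with hCdef
  have hC0 : 0 ≤ C := div_nonneg (by linarith) (by positivity)
  set K : ℝ := (3*(Dmin:ℝ)+1)/(2*(Dmin:ℝ)*((Dmin:ℝ)+1)) with hKdef
  have hK0 : 0 ≤ K := div_nonneg (by linarith) (by positivity)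
  -- degree-drop facts
  have hcard_u : ((N' ustar).card : ℝ) + 1 = ((N ustar).card : ℝ) := by
    rw [hN'u, Finset.card_sdiff_of_subset (Finset.singleton_subset_iff.mpr hu), Finset.card_singleton,
      Nat.cast_sub (Finset.card_pos.mpr ⟨vstar, hu⟩)]
    simp
  have hcard_v : ((N' vstar).card : ℝ) + 1 = ((N vstar).card : ℝ) := by
    rw [hN'v, Finset.card_sdiff_of_subset (Finset.singleton_subset_iff.mpr hv), Finset.card_singleton,
      Nat.cast_sub (Finset.card_pos.mpr ⟨ustar, hv⟩)]
    simp
  -- endpoint bounds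
  have hub : ‖t ustar - t' ustar‖ ≤ ‖W‖ * K := by
    rw [ht ustar, ht' ustar]
    exact endpoint_bound (Dmin:ℝ) hD2 W h hnorm N N' hdeg ustar vstar hu hN'u
      (fun u hu' => by
        rcases Finset.mem_sdiff.mp hu' with ⟨hmem, hnb⟩
        exact hother u (fun e => hloop ustar (e ▸ hmem)) (fun e => hnb (Finset.mem_singleton.mpr e)))
  have hvb : ‖t vstar - t' vstar‖ ≤ ‖W‖ * K := by
    rw [ht vstar, ht' vstar]
    exact endpoint_bound (Dmin:ℝ) hD2 W h hnorm N N' hdeg vstar ustar hv hN'v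
      (fun u hu' => by
        rcases Finset.mem_sdiff.mp hu' with ⟨hmem, hnb⟩
        exact hother u (fun e => hnb (Finset.mem_singleton.mpr e)) (fun e => hloop vstar (e ▸ hmem)))
  -- sum decomposition
  set S : Finset V := (Finset.univ.erase ustar).erase vstar with hSdef
  set qu : ℝ := (2*((N ustar).card : ℝ)*Real.sqrt (((N ustar).card : ℝ)+1))⁻¹ * (Real.sqrt ((Dmin:ℝ)+1))⁻¹ with hqu
  set qv : ℝ := (2*((N vstar).card : ℝ)*Real.sqrt (((N vstar).card : ℝ)+1))⁻¹ * (Real.sqrt ((Dmin:ℝ)+1))⁻¹ with hqv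
  have hqu0 : 0 ≤ qu := by rw [hqu]; positivity
  have hqv0 : 0 ≤ qv := by rw [hqv]; positivity
  have hwb : ∀ w ∈ S, ‖t w - t' w‖ ≤ ‖W‖ * ((if ustar ∈ N w then qu else 0) + (if vstar ∈ N w then qv else 0)) := by
    intro w hw
    rcases Finset.mem_erase.mp hw with ⟨hwv, hw'⟩
    rcases Finset.mem_erase.mp hw' with ⟨hwu, -⟩
    rw [ht w, ht' w]
    exact other_bound (Dmin:ℝ) hD2 W h hnorm N N' hdeg ustar vstar w hne
      (hother w hwu hwv) hcard_u hcard_v (fun u hua hub' => hother u hua hub')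
  -- squares over S
  have hwsq : ∀ w ∈ S, ‖t w - t' w‖^2 ≤ ‖W‖^2 * (2*(if ustar ∈ N w then qu else 0)^2 + 2*(if vstar ∈ N w then qv else 0)^2) := by
    intro w hw
    have h1 := hwb w hw
    set x : ℝ := (if ustar ∈ N w then qu else 0) with hxdef
    set y : ℝ := (if vstar ∈ N w then qv else 0) with hydef
    have h2 : ‖t w - t' w‖^2 ≤ (‖W‖ * (x + y))^2 :=
      pow_le_pow_left₀ (norm_nonneg _) h1 2
    have h3 : (x + y)^2 ≤ 2*x^2 + 2*y^2 := by nlinarith [sq_nonneg (x - y)]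
    calc ‖t w - t' w‖^2 ≤ (‖W‖ * (x + y))^2 := h2
      _ = ‖W‖^2 * (x + y)^2 := by rw [mul_pow]
      _ ≤ ‖W‖^2 * (2*x^2 + 2*y^2) := mul_le_mul_of_nonneg_left h3 (by positivity)
  have count_u : ∑ w ∈ S, (if ustar ∈ N w then qu else 0)^2 ≤ ((N ustar).card : ℝ) * qu^2 := by
    have hstep : ∀ w ∈ S, (if ustar ∈ N w then qu else 0)^2 ≤ (if w ∈ N ustar then qu^2 else 0) := by
      intro w _
      by_cases hm : ustar ∈ N w
      · rw [if_pos hm, if_pos ((hsym ustar w).mp hm)]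
      · rw [if_neg hm]
        split_ifs
        · simpa using sq_nonneg qu
        · simp
    calc ∑ w ∈ S, (if ustar ∈ N w then qu else 0)^2 ≤ ∑ w ∈ S, (if w ∈ N ustar then qu^2 else 0) :=
          Finset.sum_le_sum hstep
      _ = ∑ w ∈ S ∩ N ustar, qu^2 := Finset.sum_ite_mem S (N ustar) _
      _ = ((S ∩ N ustar).card : ℝ) * qu^2 := by rw [Finset.sum_const, nsmul_eq_mul]
      _ ≤ ((N ustar).card : ℝ) * qu^2 := by
          have hcard : ((S ∩ N ustar).card : ℝ) ≤ ((N ustar).card : ℝ) := by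
            exact_mod_cast Finset.card_le_card Finset.inter_subset_right
          exact mul_le_mul_of_nonneg_right hcard (sq_nonneg qu)
  have count_v : ∑ w ∈ S, (if vstar ∈ N w then qv else 0)^2 ≤ ((N vstar).card : ℝ) * qv^2 := by
    have hstep : ∀ w ∈ S, (if vstar ∈ N w then qv else 0)^2 ≤ (if w ∈ N vstar then qv^2 else 0) := by
      intro w _
      by_cases hm : vstar ∈ N w
      · rw [if_pos hm, if_pos ((hsym vstar w).mp hm)]
      · rw [if_neg hm]
        split_ifs
        · simpa using sq_nonneg qv
        · simp
    calc ∑ w ∈ S, (if vstar ∈ N w then qv else 0)^2 ≤ ∑ w ∈ S, (if w ∈ N vstar then qv^2 else 0) :=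
          Finset.sum_le_sum hstep
      _ = ∑ w ∈ S ∩ N vstar, qv^2 := Finset.sum_ite_mem S (N vstar) _
      _ = ((S ∩ N vstar).card : ℝ) * qv^2 := by rw [Finset.sum_const, nsmul_eq_mul]
      _ ≤ ((N vstar).card : ℝ) * qv^2 := by
          have hcard : ((S ∩ N vstar).card : ℝ) ≤ ((N vstar).card : ℝ) := by
            exact_mod_cast Finset.card_le_card Finset.inter_subset_right
          exact mul_le_mul_of_nonneg_right hcard (sq_nonneg qv)
  have hSsum : ∑ w ∈ S, ‖t w - t' w‖^2 ≤ ‖W‖^2 * (1/(2*(Dmin:ℝ)*((Dmin:ℝ)+1)^2) + 1/(2*(Dmin:ℝ)*((Dmin:ℝ)+1)^2)) := by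
    calc ∑ w ∈ S, ‖t w - t' w‖^2
        ≤ ∑ w ∈ S, ‖W‖^2 * (2*(if ustar ∈ N w then qu else 0)^2 + 2*(if vstar ∈ N w then qv else 0)^2) :=
          Finset.sum_le_sum hwsq
      _ = ‖W‖^2 * (2*(∑ w ∈ S, (if ustar ∈ N w then qu else 0)^2) + 2*(∑ w ∈ S, (if vstar ∈ N w then qv else 0)^2)) := by
          rw [← Finset.mul_sum, Finset.sum_add_distrib, ← Finset.mul_sum, ← Finset.mul_sum]
      _ ≤ ‖W‖^2 * (2*(((N ustar).card : ℝ) * qu^2) + 2*(((N vstar).card : ℝ) * qv^2)) := by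
          have hXY : 2*(∑ w ∈ S, (if ustar ∈ N w then qu else 0)^2) + 2*(∑ w ∈ S, (if vstar ∈ N w then qv else 0)^2)
              ≤ 2*(((N ustar).card : ℝ) * qu^2) + 2*(((N vstar).card : ℝ) * qv^2) := by
            linarith [count_u, count_v]
          exact mul_le_mul_of_nonneg_left hXY (sq_nonneg _)
      _ ≤ ‖W‖^2 * (1/(2*(Dmin:ℝ)*((Dmin:ℝ)+1)^2) + 1/(2*(Dmin:ℝ)*((Dmin:ℝ)+1)^2)) := by
          have hq1 := q_bound (Dmin:ℝ) ((N ustar).card : ℝ) hD2 (hdeg ustar)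
          have hq2 := q_bound (Dmin:ℝ) ((N vstar).card : ℝ) hD2 (hdeg vstar)
          have hXY : 2*(((N ustar).card : ℝ) * qu^2) + 2*(((N vstar).card : ℝ) * qv^2)
              ≤ 1/(2*(Dmin:ℝ)*((Dmin:ℝ)+1)^2) + 1/(2*(Dmin:ℝ)*((Dmin:ℝ)+1)^2) := by
            rw [hqu, hqv]
            linarith [hq1, hq2]
          exact mul_le_mul_of_nonneg_left hXY (sq_nonneg _)
  -- total
  have hvS : vstar ∈ Finset.univ.erase ustar := Finset.mem_erase.mpr ⟨hne.symm, Finset.mem_univ _⟩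
  have htotal : ∑ v : V, ‖t v - t' v‖^2 ≤ (Real.sqrt 2 * C * ‖W‖)^2 := by
    have hdecomp : ∑ v : V, ‖t v - t' v‖^2
        = ‖t ustar - t' ustar‖^2 + (‖t vstar - t' vstar‖^2 + ∑ w ∈ S, ‖t w - t' w‖^2) := by
      rw [← Finset.add_sum_erase _ _ (Finset.mem_univ ustar), ← Finset.add_sum_erase _ _ hvS]
    rw [hdecomp]
    have hu2 : ‖t ustar - t' ustar‖^2 ≤ (‖W‖*K)^2 := pow_le_pow_left₀ (norm_nonneg _) hub 2
    have hv2 : ‖t vstar - t' vstar‖^2 ≤ (‖W‖*K)^2 := pow_le_pow_left₀ (norm_nonneg _) hvb 2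
    have hfin := final_ineq (Dmin:ℝ) hD2
    have hsq2 : (Real.sqrt 2 * C * ‖W‖)^2 = ‖W‖^2 * (2*C^2) := by
      rw [mul_pow, mul_pow, Real.sq_sqrt (by norm_num : (0:ℝ) ≤ 2)]
      ring
    rw [hsq2]
    calc ‖t ustar - t' ustar‖^2 + (‖t vstar - t' vstar‖^2 + ∑ w ∈ S, ‖t w - t' w‖^2)
        ≤ (‖W‖*K)^2 + ((‖W‖*K)^2 + ‖W‖^2 * (1/(2*(Dmin:ℝ)*((Dmin:ℝ)+1)^2) + 1/(2*(Dmin:ℝ)*((Dmin:ℝ)+1)^2))) := by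
          exact add_le_add hu2 (add_le_add hv2 hSsum)
      _ = ‖W‖^2 * (2*K^2 + (1/(2*(Dmin:ℝ)*((Dmin:ℝ)+1)^2) + 1/(2*(Dmin:ℝ)*((Dmin:ℝ)+1)^2))) := by ring
      _ ≤ ‖W‖^2 * (2*C^2) := by
          apply mul_le_mul_of_nonneg_left _ (by positivity)
          rw [hKdef, hCdef]
          exact final_ineq (Dmin:ℝ) hD2
  rw [hCform]
  calc Real.sqrt (∑ v : V, ‖t v - t' v‖^2) ≤ Real.sqrt ((Real.sqrt 2 * C * ‖W‖)^2) :=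
        Real.sqrt_le_sqrt htotal
    _ = Real.sqrt 2 * C * ‖W‖ := Real.sqrt_sq (by positivity)
end
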